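/- arXiv:2207.12186 — 4 statements merged into one kernel-verified Lean document; each statement's English description precedes it below -/
import Mathlib

section
/- Gold identification in the limit (Gold, 1967, convergence part): Let X be a type, p : ℕ → X → Bool an enumeration of encodings, and (x, y) a labeled observation stream. If some encoding is fully compatible with the stream, then there exist L and T such that the Gold learner's guess satisfies G t = L for all t ≥ T, encoding L is fully compatible with the stream (p L (x s) = y s for all s : ℕ), and L is the least index whose encoding is fully compatible with the stream. -/
/-- **Gold identification in the limit (Gold, 1967, convergence part).**
If some encoding is fully compatible with the labeled observation stream, then
the Gold learner's guess `G t` (the least `n` compatible with the first `t`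
observations) converges: there exist `L` and `T` with `G t = L` for all
`t ≥ T`, encoding `L` is fully compatible with the stream, and `L` is the
least index whose encoding is fully compatible with the stream. -/
theorem gold_identification_in_the_limit {X : Type*} (p : ℕ → X → Bool)
    (x : ℕ → X) (y : ℕ → Bool)
    (G : ℕ → ℕ)
    (hG : ∀ t : ℕ, IsLeast {n : ℕ | ∀ s < t, p n (x s) = y s} (G t))
    (hN : ∃ N : ℕ, ∀ s : ℕ, p N (x s) = y s) :
    ∃ L T : ℕ,
      (∀ t : ℕ, T ≤ t → G t = L) ∧
      (∀ s : ℕ, p L (x s) = y s) ∧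
      IsLeast {m : ℕ | ∀ s : ℕ, p m (x s) = y s} L := by
  classical
  set L := Nat.find hN with hLdef
  have hL : ∀ s : ℕ, p L (x s) = y s := Nat.find_spec hN
  have hmin : ∀ m, (∀ s : ℕ, p m (x s) = y s) → L ≤ m := fun m hm =>
    Nat.find_min' hN hm
  -- for each n < L pick a witness of failure
  have hwit : ∀ n < L, ∃ s, p n (x s) ≠ y s := by
    intro n hn
    have := Nat.find_min hN hn
    push_neg at this
    exact this
  choose! w hw using hwit
  -- T : bound on witnesses
  refine ⟨L, (Finset.range L).sup (fun n => w n + 1), ?_, hL, hL, hmin⟩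
  intro t ht
  have hGL := hG t
  have hLmem : L ∈ {n : ℕ | ∀ s < t, p n (x s) = y s} := fun s _ => hL s
  have hle : G t ≤ L := hGL.2 hLmem
  rcases lt_or_eq_of_le hle with hlt | heq
  · exfalso
    have hwGt : w (G t) < t := by
      have : w (G t) + 1 ≤ (Finset.range L).sup (fun n => w n + 1) :=
        Finset.le_sup (f := fun n => w n + 1) (Finset.mem_range.mpr hlt)
      omega
    exact hw (G t) hlt (hGL.1 (w (G t)) hwGt)
  · exact heq
end

section
/- Gold learner understands identifiable concepts (Gold, 1967): Let X be a type, p : ℕ → X → Bool an enumeration of encodings, and (x, y) a labeled observation stream. Assume some encoding N is fully compatible with the stream, and assume identifiability: every encoding m that is fully compatible with the stream satisfies p m = p N (equality as functions X → Bool). Then there exist L and T such that the Gold learner's guess satisfies G t = L for all t ≥ T and p L = p N; that is, the Gold learner converges in finitely many steps to an encoding of the true concept. -/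
/-- **Gold learner understands identifiable concepts (Gold, 1967).**
Assume some encoding `N` is fully compatible with the labeled observation
stream, and assume identifiability: every encoding `m` fully compatible with
the stream satisfies `p m = p N`.  Then the Gold learner's guess `G t` (the
least `n` compatible with the first `t` observations) converges in finitely
many steps to an encoding of the true concept: there exist `L` and `T` such
that `G t = L` for all `t ≥ T` and `p L = p N`. -/
theorem gold_learner_understands {X : Type*} (p : ℕ → X → Bool)
    (x : ℕ → X) (y : ℕ → Bool)
    (G : ℕ → ℕ)
    (hG : ∀ t : ℕ, IsLeast {n : ℕ | ∀ s < t, p n (x s) = y s} (G t))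
    (N : ℕ) (hN : ∀ s : ℕ, p N (x s) = y s)
    (hid : ∀ m : ℕ, (∀ s : ℕ, p m (x s) = y s) → p m = p N) :
    ∃ L T : ℕ, (∀ t : ℕ, T ≤ t → G t = L) ∧ p L = p N := by
  classical
  -- L := least fully compatible encoding
  have hex : ∃ n, ∀ s : ℕ, p n (x s) = y s := ⟨N, hN⟩
  set L := Nat.find hex with hL
  have hLc : ∀ s : ℕ, p L (x s) = y s := Nat.find_spec hex
  -- for each m < L, pick a failing observation time
  have hfail : ∀ m < L, ∃ s, p m (x s) ≠ y s := by
    intro m hm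
    have := Nat.find_min hex hm
    push_neg at this
    exact this
  choose f hf using hfail
  -- T bounds all witnesses
  obtain ⟨T, hT⟩ : ∃ T, ∀ m (hm : m < L), f m hm < T := by
    refine ⟨(Finset.range L).sup (fun m => if h : m < L then f m h + 1 else 0), ?_⟩
    intro m hm
    have h2 := Finset.le_sup (f := fun m => if h : m < L then f m h + 1 else 0)
      (Finset.mem_range.mpr hm)
    simp only [dif_pos hm] at h2
    omega
  refine ⟨L, T, ?_, hid L hLc⟩
  intro t ht
  obtain ⟨hmem, hlb⟩ := hG t
  have h1 : G t ≤ L := hlb (fun s _ => hLc s)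
  rcases h1.lt_or_eq with h | h
  · exact absurd (hmem (f (G t) h) ((hT _ h).trans_le ht)) (hf _ h)
  · exact h
end

section
/- No feed-forward ReLU architecture can encode the concept of "even number" (ReLU instance of the paper's Proposition): Let N be the smallest set of functions ℝ → ℝ that contains every affine function x ↦ a·x + b and is closed under pointwise addition, composition, and the ReLU nonlinearity f ↦ (fun x => max (f x) 0). Then no f ∈ N satisfies f (2·n) ≥ 1/2 and f (2·n + 1) < 1/2 for all n : ℕ; that is, no such network can partition arbitrarily large numbers into even and odd, regardless of the number of weights. -/
/-- The class of one-dimensional ReLU networks: the smallest set of functions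
`ℝ → ℝ` containing every affine function `x ↦ a·x + b` and closed under
pointwise addition, composition, and the ReLU nonlinearity. -/
inductive ReLUNet : (ℝ → ℝ) → Prop
  | affine (a b : ℝ) : ReLUNet (fun x => a * x + b)
  | add {f g : ℝ → ℝ} : ReLUNet f → ReLUNet g → ReLUNet (fun x => f x + g x)
  | comp {f g : ℝ → ℝ} : ReLUNet f → ReLUNet g → ReLUNet (f ∘ g)
  | relu {f : ℝ → ℝ} : ReLUNet f → ReLUNet (fun x => max (f x) 0)

/-- `f` is eventually affine to the right. -/
def RA (f : ℝ → ℝ) : Prop := ∃ M a b : ℝ, ∀ x : ℝ, M ≤ x → f x = a * x + b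

lemma RA_add {f g : ℝ → ℝ} (hf : RA f) (hg : RA g) : RA (fun x => f x + g x) := by
  obtain ⟨M, a, b, hf⟩ := hf
  obtain ⟨N, c, d, hg⟩ := hg
  exact ⟨max M N, a + c, b + d, fun x hx => by
    show f x + g x = _
    rw [hf x (le_trans (le_max_left _ _) hx), hg x (le_trans (le_max_right _ _) hx)]; ring⟩

lemma RA_relu {f : ℝ → ℝ} (hf : RA f) : RA (fun x => max (f x) 0) := by
  obtain ⟨M, a, b, hf⟩ := hf
  rcases lt_trichotomy a 0 with ha | ha | ha
  · refine ⟨max M ((-b) / a), 0, 0, fun x hx => ?_⟩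
    have h1 : M ≤ x := le_trans (le_max_left _ _) hx
    have h2 : (-b) / a ≤ x := le_trans (le_max_right _ _) hx
    have : a * x ≤ -b := by
      rw [div_le_iff_of_neg ha] at h2
      linarith
    show max (f x) 0 = _
    rw [hf x h1]
    simp only [zero_mul, zero_add]
    exact max_eq_right (by linarith)
  · refine ⟨M, 0, max b 0, fun x hx => ?_⟩
    show max (f x) 0 = _
    rw [hf x hx, ha]; ring_nf
  · refine ⟨max M ((-b) / a), a, b, fun x hx => ?_⟩
    have h1 : M ≤ x := le_trans (le_max_left _ _) hx
    have h2 : (-b) / a ≤ x := le_trans (le_max_right _ _) hx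
    have : -b ≤ a * x := by
      rw [div_le_iff₀ ha] at h2
      linarith
    show max (f x) 0 = _
    rw [hf x h1]
    exact max_eq_left (by linarith)

lemma RA_comp {f g : ℝ → ℝ} (hfr : RA f) (hfl : RA (fun x => f (-x))) (hg : RA g) :
    RA (fun x => f (g x)) := by
  obtain ⟨N, c, d, hg⟩ := hg
  rcases lt_trichotomy c 0 with hc | hc | hc
  · -- g tends to -∞; use left behaviour of f
    obtain ⟨M, a, b, hf⟩ := hfl
    refine ⟨max N ((M + d) / (-c)), -a * c, -a * d + b, fun x hx => ?_⟩
    have h1 : N ≤ x := le_trans (le_max_left _ _) hx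
    have h2 : (M + d) / (-c) ≤ x := le_trans (le_max_right _ _) hx
    have hc' : (0:ℝ) < -c := by linarith
    have h3 : M + d ≤ (-c) * x := by
      rw [div_le_iff₀ hc'] at h2; linarith
    have h4 : M ≤ -(g x) := by rw [hg x h1]; linarith
    have := hf (-(g x)) h4
    simp only [neg_neg] at this
    show f (g x) = _
    rw [this, hg x h1]; ring
  · refine ⟨N, 0, f d, fun x hx => ?_⟩
    show f (g x) = _
    rw [hg x hx, hc]; ring_nf
  · obtain ⟨M, a, b, hf⟩ := hfr
    refine ⟨max N ((M - d) / c), a * c, a * d + b, fun x hx => ?_⟩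
    have h1 : N ≤ x := le_trans (le_max_left _ _) hx
    have h2 : (M - d) / c ≤ x := le_trans (le_max_right _ _) hx
    have h3 : M - d ≤ c * x := by rw [div_le_iff₀ hc] at h2; linarith
    have h4 : M ≤ g x := by rw [hg x h1]; linarith
    show f (g x) = _
    rw [hf (g x) h4, hg x h1]; ring

lemma ReLUNet_RA {f : ℝ → ℝ} (hf : ReLUNet f) : RA f ∧ RA (fun x => f (-x)) := by
  induction hf with
  | affine a b =>
      exact ⟨⟨0, a, b, fun x _ => rfl⟩, ⟨0, -a, b, fun x _ => by ring⟩⟩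
  | add hf hg ihf ihg =>
      exact ⟨RA_add ihf.1 ihg.1, RA_add ihf.2 ihg.2⟩
  | @comp p q hp hq ihp ihq =>
      refine ⟨?_, ?_⟩
      · show RA (fun x => p (q x))
        exact RA_comp ihp.1 ihp.2 ihq.1
      · show RA (fun x => p (q (-x)))
        exact RA_comp ihp.1 ihp.2 ihq.2
  | relu hf ih =>
      exact ⟨RA_relu ih.1, RA_relu ih.2⟩

/-- **No feed-forward ReLU architecture can encode the concept of "even
number".**  No one-dimensional ReLU network `f` satisfies `f (2·n) ≥ 1/2` and
`f (2·n + 1) < 1/2` for all `n : ℕ`; that is, no such network can partition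
arbitrarily large numbers into even and odd, regardless of the number of
weights. -/
theorem relu_net_cannot_encode_even (f : ℝ → ℝ) (hf : ReLUNet f) :
    ¬ (∀ n : ℕ, f (2 * n) ≥ 1 / 2 ∧ f (2 * n + 1) < 1 / 2) := by
  intro h
  obtain ⟨M, a, b, hM⟩ := (ReLUNet_RA hf).1
  set n : ℕ := ⌈max M 0⌉₊ with hn
  have hMn : M ≤ (n : ℝ) := le_trans (le_max_left M 0) (Nat.le_ceil _)
  have hn0 : (0:ℝ) ≤ (n : ℝ) := Nat.cast_nonneg n
  have e1 : f (2 * (n : ℝ)) = a * (2 * n) + b := hM _ (by linarith)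
  have e2 : f (2 * (n : ℝ) + 1) = a * (2 * n + 1) + b := hM _ (by linarith)
  have e3 : f (2 * ((n : ℝ) + 1)) = a * (2 * n + 2) + b := by
    rw [hM _ (by linarith)]; ring
  have h1 := (h n).1
  have h2 := (h n).2
  have h3 := (h (n + 1)).1
  push_cast at h1 h2 h3
  rw [e1] at h1
  rw [e2] at h2
  rw [e3] at h3
  linarith
end

section
/- Nonzero nested exponential polynomials have finitely many real zeros: Let E be the smallest set of functions ℝ → ℝ that contains every constant function and the identity function, and is closed under pointwise addition, pointwise multiplication, and exponentiation f ↦ (fun x => Real.exp (f x)). Then for every f ∈ E, either f is identically zero on ℝ, or the zero set {x : ℝ | f x = 0} is finite. -/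
/-- The class of nested exponential polynomials: the smallest set of functions
`ℝ → ℝ` containing every constant function and the identity, and closed under
pointwise addition, pointwise multiplication, and exponentiation
`f ↦ fun x => Real.exp (f x)`. -/
inductive ExpPoly : (ℝ → ℝ) → Prop
  | const (c : ℝ) : ExpPoly (fun _ => c)
  | id : ExpPoly (fun x => x)
  | add {f g : ℝ → ℝ} : ExpPoly f → ExpPoly g → ExpPoly (fun x => f x + g x)
  | mul {f g : ℝ → ℝ} : ExpPoly f → ExpPoly g → ExpPoly (fun x => f x * g x)
  | exp {f : ℝ → ℝ} : ExpPoly f → ExpPoly (fun x => Real.exp (f x))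

open Filter Set Topology

/-- Leveled nested exponential polynomials: at level `n+1` one may take `exp` of
level-`n` functions. -/
inductive EP : ℕ → (ℝ → ℝ) → Prop
  | const (n : ℕ) (c : ℝ) : EP n (fun _ => c)
  | id (n : ℕ) : EP n (fun x => x)
  | add {n : ℕ} {f g : ℝ → ℝ} : EP n f → EP n g → EP n (fun x => f x + g x)
  | mul {n : ℕ} {f g : ℝ → ℝ} : EP n f → EP n g → EP n (fun x => f x * g x)
  | exp {n : ℕ} {f : ℝ → ℝ} : EP n f → EP (n + 1) (fun x => Real.exp (f x))
  | mono {n : ℕ} {f : ℝ → ℝ} : EP n f → EP (n + 1) f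

theorem EP.le {n m : ℕ} {f : ℝ → ℝ} (hf : EP n f) (h : n ≤ m) : EP m f := by
  induction h with
  | refl => exact hf
  | step _ ih => exact ih.mono

theorem EP.sub {n : ℕ} {f g : ℝ → ℝ} (hf : EP n f) (hg : EP n g) :
    EP n (fun x => f x - g x) := by
  have : (fun x => f x - g x) = fun x => f x + (fun _ : ℝ => (-1:ℝ)) x * g x := by
    funext x; ring
  rw [this]; exact hf.add ((EP.const n (-1)).mul hg)

theorem EP.hasDerivAt {n : ℕ} {f : ℝ → ℝ} (hf : EP n f) :
    ∃ f' : ℝ → ℝ, EP n f' ∧ ∀ x, HasDerivAt f (f' x) x := by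
  induction hf with
  | const n c => exact ⟨fun _ => 0, EP.const n 0, fun x => hasDerivAt_const x c⟩
  | id n => exact ⟨fun _ => 1, EP.const n 1, fun x => hasDerivAt_id x⟩
  | add hf hg ihf ihg =>
    obtain ⟨f', hf', Hf⟩ := ihf; obtain ⟨g', hg', Hg⟩ := ihg
    exact ⟨fun x => f' x + g' x, hf'.add hg', fun x => (Hf x).add (Hg x)⟩
  | mul hf hg ihf ihg =>
    obtain ⟨f', hf', Hf⟩ := ihf; obtain ⟨g', hg', Hg⟩ := ihg
    rename_i n f g
    exact ⟨fun x => f' x * g x + f x * g' x, (hf'.mul hg).add (hf.mul hg'),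
      fun x => (Hf x).mul (Hg x)⟩
  | exp hf ihf =>
    obtain ⟨f', hf', Hf⟩ := ihf
    rename_i n f
    exact ⟨fun x => Real.exp (f x) * f' x, (EP.exp hf).mul hf'.mono,
      fun x => (Hf x).exp⟩
  | mono hf ihf =>
    obtain ⟨f', hf', Hf⟩ := ihf
    exact ⟨f', hf'.mono, Hf⟩

theorem EP.deriv_mem {n : ℕ} {f : ℝ → ℝ} (hf : EP n f) :
    EP n (deriv f) ∧ ∀ x, HasDerivAt f (deriv f x) x := by
  obtain ⟨f', hf', Hf⟩ := hf.hasDerivAt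
  have : deriv f = f' := funext fun x => (Hf x).deriv
  rw [this]; exact ⟨hf', Hf⟩

theorem expPoly_exists_EP {f : ℝ → ℝ} (hf : ExpPoly f) : ∃ n, EP n f := by
  induction hf with
  | const c => exact ⟨0, EP.const 0 c⟩
  | id => exact ⟨0, EP.id 0⟩
  | add hf hg ihf ihg =>
    obtain ⟨n, hn⟩ := ihf; obtain ⟨m, hm⟩ := ihg
    exact ⟨max n m, (hn.le (le_max_left n m)).add (hm.le (le_max_right n m))⟩
  | mul hf hg ihf ihg =>
    obtain ⟨n, hn⟩ := ihf; obtain ⟨m, hm⟩ := ihg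
    exact ⟨max n m, (hn.le (le_max_left n m)).mul (hm.le (le_max_right n m))⟩
  | exp hf ihf => obtain ⟨n, hn⟩ := ihf; exact ⟨n + 1, hn.exp⟩

theorem expPoly_neg_comp {f : ℝ → ℝ} (hf : ExpPoly f) : ExpPoly (fun x => f (-x)) := by
  induction hf with
  | const c => exact ExpPoly.const c
  | id =>
    have : (fun x : ℝ => -x) = fun x : ℝ => (fun _ : ℝ => (-1:ℝ)) x * x := by
      funext x; ring
    exact this ▸ ExpPoly.mul (ExpPoly.const (-1)) ExpPoly.id
  | add _ _ ihf ihg => exact ihf.add ihg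
  | mul _ _ ihf ihg => exact ihf.mul ihg
  | exp _ ihf => exact ihf.exp

/-- The sign trichotomy at `atTop`. -/
def Tri (f : ℝ → ℝ) : Prop :=
  (∀ᶠ x in atTop, 0 < f x) ∨ (∀ᶠ x in atTop, f x < 0) ∨ (∀ᶠ x in atTop, f x = 0)

theorem Tri.congr {f g : ℝ → ℝ} (h : ∀ᶠ x in atTop, f x = g x) (hf : Tri f) : Tri g := by
  rcases hf with H | H | H
  · exact Or.inl (by filter_upwards [h, H] with x h1 h2; rwa [h1] at h2)
  · exact Or.inr (Or.inl (by filter_upwards [h, H] with x h1 h2; rwa [h1] at h2))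
  · exact Or.inr (Or.inr (by filter_upwards [h, H] with x h1 h2; rwa [h1] at h2))

/-- A continuous function with no zeros on a ray has constant sign there. -/
theorem sign_of_ray_ne_zero {f : ℝ → ℝ} {a : ℝ} (hc : ContinuousOn f (Ici a))
    (h : ∀ x ≥ a, f x ≠ 0) : (∀ x ≥ a, 0 < f x) ∨ (∀ x ≥ a, f x < 0) := by
  rcases (h a le_rfl).lt_or_gt with hfa | hfa
  · refine Or.inr fun x hx => ?_
    rcases (h x hx).lt_or_gt with h' | h'
    · exact h'
    · exfalso
      obtain ⟨c, hc1, hc2⟩ := intermediate_value_Icc hx (hc.mono (Icc_subset_Ici_self))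
        (show (0:ℝ) ∈ Icc (f a) (f x) from ⟨hfa.le, h'.le⟩)
      exact h c (hc1.1) hc2
  · refine Or.inl fun x hx => ?_
    rcases (h x hx).lt_or_gt with h' | h'
    · exfalso
      obtain ⟨c, hc1, hc2⟩ := intermediate_value_Icc' hx (hc.mono (Icc_subset_Ici_self))
        (show (0:ℝ) ∈ Icc (f x) (f a) from ⟨h'.le, hfa.le⟩)
      exact h c (hc1.1) hc2
    · exact h'

/-- A function monotone on a ray tends to `atTop` or to a finite limit. -/
theorem tendsto_of_monotoneOn_Ici {r : ℝ → ℝ} {a : ℝ} (h : MonotoneOn r (Ici a)) :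
    Tendsto r atTop atTop ∨ ∃ c, Tendsto r atTop (𝓝 c) := by
  set R : ℝ → ℝ := fun y => r (max y a) with hR
  have hRmono : Monotone R := fun y y' hy =>
    h (le_max_right y a) (le_max_right y' a) (max_le_max hy le_rfl)
  have heq : R =ᶠ[atTop] r := by
    filter_upwards [eventually_ge_atTop a] with x hx
    simp [hR, max_eq_left hx]
  rcases tendsto_of_monotone hRmono with H | ⟨c, H⟩
  · exact Or.inl (H.congr' heq)
  · exact Or.inr ⟨c, H.congr' heq⟩

theorem tendsto_of_antitoneOn_Ici {r : ℝ → ℝ} {a : ℝ} (h : AntitoneOn r (Ici a)) :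
    Tendsto r atTop atBot ∨ ∃ c, Tendsto r atTop (𝓝 c) := by
  have h' : MonotoneOn (fun x => -r x) (Ici a) := fun x hx y hy hxy => by
    simpa using h hx hy hxy
  rcases tendsto_of_monotoneOn_Ici h' with H | ⟨c, H⟩
  · left
    rw [show r = fun x => -(-r x) by funext x; ring]
    exact Filter.tendsto_neg_atBot_iff.mpr H
  · right
    refine ⟨-c, ?_⟩
    rw [show r = fun x => -(-r x) by funext x; ring]
    exact H.neg

/-- A finite nonempty set with a total transitive relation has a top element. -/
theorem finset_exists_forall_rel {ι : Type*} (rel : ι → ι → Prop)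
    (s : Finset ι) : s.Nonempty →
    (∀ j ∈ s, ∀ j' ∈ s, rel j j' ∨ rel j' j) →
    (∀ a ∈ s, ∀ b ∈ s, ∀ c ∈ s, rel a b → rel b c → rel a c) →
    ∃ m ∈ s, ∀ j ∈ s, rel j m := by
  classical
  refine Finset.induction_on s (fun hne _ _ => absurd hne (by simp)) ?_
  intro a t ha ih _ htot htrans
  rcases t.eq_empty_or_nonempty with rfl | htne
  · refine ⟨a, by simp, ?_⟩
    intro j hj
    simp only [Finset.mem_insert, Finset.notMem_empty, or_false] at hj
    subst hj
    rcases htot j (by simp) j (by simp) with h | h <;> exact h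
  · obtain ⟨m, hm, hmax⟩ := ih htne
      (fun j hj j' hj' => htot j (Finset.mem_insert_of_mem hj) j' (Finset.mem_insert_of_mem hj'))
      (fun x hx y hy z hz => htrans x (Finset.mem_insert_of_mem hx) y
        (Finset.mem_insert_of_mem hy) z (Finset.mem_insert_of_mem hz))
    have hmins : m ∈ insert a t := Finset.mem_insert_of_mem hm
    have hains : a ∈ insert a t := Finset.mem_insert_self a t
    rcases htot a hains m hmins with h | h
    · refine ⟨m, hmins, ?_⟩
      intro j hj
      rcases Finset.mem_insert.mp hj with rfl | hj
      · exact h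
      · exact hmax j hj
    · refine ⟨a, hains, ?_⟩
      intro j hj
      rcases Finset.mem_insert.mp hj with rfl | hj
      · rcases htot j hj j hj with h' | h' <;> exact h'
      · exact htrans j (Finset.mem_insert_of_mem hj) m hmins a hains (hmax j hj) h

theorem EP_zero_poly {n : ℕ} {f : ℝ → ℝ} (hf : EP n f) (hn : n = 0) :
    ∃ p : Polynomial ℝ, ∀ x, f x = p.eval x := by
  induction hf with
  | const n c => exact ⟨Polynomial.C c, fun x => by simp⟩
  | id n => exact ⟨Polynomial.X, fun x => by simp⟩
  | add hf hg ihf ihg =>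
    obtain ⟨p, hp⟩ := ihf hn; obtain ⟨q, hq⟩ := ihg hn
    exact ⟨p + q, fun x => by simp [hp x, hq x]⟩
  | mul hf hg ihf ihg =>
    obtain ⟨p, hp⟩ := ihf hn; obtain ⟨q, hq⟩ := ihg hn
    exact ⟨p * q, fun x => by simp [hp x, hq x]⟩
  | exp hf ihf => exact absurd hn (by simp)
  | mono hf ihf => exact absurd hn (by simp)

/-- Continuous, eventually nonzero implies eventual constant sign. -/
theorem tri_of_eventually_ne_zero {f : ℝ → ℝ} (hc : Continuous f)
    (h : ∀ᶠ x in atTop, f x ≠ 0) : Tri f := by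
  obtain ⟨a, ha⟩ := eventually_atTop.mp h
  rcases sign_of_ray_ne_zero (hc.continuousOn) ha with H | H
  · exact Or.inl (eventually_atTop.mpr ⟨a, H⟩)
  · exact Or.inr (Or.inl (eventually_atTop.mpr ⟨a, H⟩))

theorem tri_of_EP_zero {f : ℝ → ℝ} (hf : EP 0 f) : Tri f := by
  obtain ⟨p, hp⟩ := EP_zero_poly hf rfl
  by_cases hp0 : p = 0
  · refine Or.inr (Or.inr (Eventually.of_forall fun x => ?_))
    rw [hp x, hp0]; simp
  · have hfin : {x : ℝ | p.IsRoot x}.Finite := p.finite_setOf_isRoot hp0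
    have hcont : Continuous f := by
      have : f = fun x => p.eval x := funext hp
      rw [this]; exact p.continuous
    refine tri_of_eventually_ne_zero hcont ?_
    obtain ⟨a, ha⟩ := hfin.bddAbove
    refine eventually_atTop.mpr ⟨a + 1, fun x hx hfx => ?_⟩
    have : x ∈ {x : ℝ | p.IsRoot x} := by
      simp only [mem_setOf_eq, Polynomial.IsRoot]
      rw [← hp x]; exact hfx
    have := ha this
    linarith

/-- Sign helper: a product of two eventually-signed functions. -/
theorem tri_mul {f A B : ℝ → ℝ} (hf : ∀ᶠ x in atTop, f x = A x * B x)
    (hA : (∀ᶠ x in atTop, 0 < A x) ∨ (∀ᶠ x in atTop, A x < 0))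
    (hB : (∀ᶠ x in atTop, 0 < B x) ∨ (∀ᶠ x in atTop, B x < 0)) : Tri f := by
  rcases hA with hA | hA <;> rcases hB with hB | hB
  · refine Or.inl ?_
    filter_upwards [hf, hA, hB] with x h1 h2 h3
    rw [h1]; exact mul_pos h2 h3
  · refine Or.inr (Or.inl ?_)
    filter_upwards [hf, hA, hB] with x h1 h2 h3
    rw [h1]; exact mul_neg_of_pos_of_neg h2 h3
  · refine Or.inr (Or.inl ?_)
    filter_upwards [hf, hA, hB] with x h1 h2 h3
    rw [h1]; exact mul_neg_of_neg_of_pos h2 h3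
  · refine Or.inl ?_
    filter_upwards [hf, hA, hB] with x h1 h2 h3
    rw [h1]; exact mul_pos_of_neg_of_neg h2 h3

/-- **Core lemma**: a finite sum `∑ uⱼ · exp hⱼ` with level-`n` data has the
sign trichotomy at `atTop`, assuming the trichotomy at level `n`. -/
theorem sum_tri (n : ℕ) (IH : ∀ g : ℝ → ℝ, EP n g → Tri g) :
    ∀ k : ℕ, ∀ {ι : Type} (s : Finset ι) (u h : ι → ℝ → ℝ),
      s.card ≤ k → (∀ j ∈ s, EP n (u j)) → (∀ j ∈ s, EP n (h j)) →
      Tri (fun x => ∑ j ∈ s, u j x * Real.exp (h j x)) := by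
  intro k
  induction k with
  | zero =>
    intro ι s u h hcard _ _
    have hs : s = ∅ := Finset.card_eq_zero.mp (Nat.le_zero.mp hcard)
    subst hs
    exact Or.inr (Or.inr (Eventually.of_forall fun x => by simp))
  | succ k IH2 =>
    intro ι s u h hcard hu hh
    classical
    rcases s.eq_empty_or_nonempty with rfl | hne
    · exact Or.inr (Or.inr (Eventually.of_forall fun x => by simp))
    by_cases hz : ∃ j ∈ s, ∀ᶠ x in atTop, u j x = 0
    · obtain ⟨j0, hj0, hj0z⟩ := hz
      have hcard' : (s.erase j0).card ≤ k := by
        rw [Finset.card_erase_of_mem hj0]; omega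
      refine Tri.congr ?_ (IH2 (s.erase j0) u h hcard'
        (fun j hj => hu j (Finset.mem_of_mem_erase hj))
        (fun j hj => hh j (Finset.mem_of_mem_erase hj)))
      filter_upwards [hj0z] with x hx
      rw [← Finset.sum_erase_add s _ hj0, hx]
      simp
    push_neg at hz
    have hsgn : ∀ j ∈ s, (∀ᶠ x in atTop, 0 < u j x) ∨ (∀ᶠ x in atTop, u j x < 0) := by
      intro j hj
      rcases IH (u j) (hu j hj) with H | H | H
      · exact Or.inl H
      · exact Or.inr H
      · exact absurd H (Filter.not_eventually.mpr (hz j hj))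
    have hune : ∀ j ∈ s, ∀ᶠ x in atTop, u j x ≠ 0 := by
      intro j hj
      rcases hsgn j hj with H | H
      · filter_upwards [H] with x hx; exact ne_of_gt hx
      · filter_upwards [H] with x hx; exact ne_of_lt hx
    set v : ι → ℝ → ℝ := fun j x => deriv (u j) x + deriv (h j) x * u j x with hv
    have hvEP : ∀ j ∈ s, EP n (v j) := fun j hj =>
      ((hu j hj).deriv_mem.1).add (((hh j hj).deriv_mem.1).mul (hu j hj))
    have hDt : ∀ j ∈ s, ∀ x : ℝ,
        HasDerivAt (fun y => u j y * Real.exp (h j y)) (v j x * Real.exp (h j x)) x := by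
      intro j hj x
      have h1 := (hu j hj).deriv_mem.2 x
      have h2 := ((hh j hj).deriv_mem.2 x).exp
      have := h1.mul h2
      exact this.congr_deriv (by simp only [hv]; ring)
    set Rel : ι → ι → Prop := fun j j' => ∃ c : ℝ,
      Tendsto (fun x => (u j x * Real.exp (h j x)) / (u j' x * Real.exp (h j' x)))
        atTop (𝓝 c) with hRel
    have hRelTot : ∀ j ∈ s, ∀ j' ∈ s, Rel j j' ∨ Rel j' j := by
      intro j hj j' hj'
      set N : ℝ → ℝ := fun x => v j x * u j' x - u j x * v j' x with hN
      have hNEP : EP n N := ((hvEP j hj).mul (hu j' hj')).sub ((hu j hj).mul (hvEP j' hj'))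
      set r : ℝ → ℝ := fun x => (u j x * Real.exp (h j x)) / (u j' x * Real.exp (h j' x))
        with hr
      have hDr : ∀ x : ℝ, u j' x ≠ 0 → HasDerivAt r
          (N x * (Real.exp (h j x) * Real.exp (h j' x)) /
            (u j' x * Real.exp (h j' x)) ^ 2) x := by
        intro x hx
        have := (hDt j hj x).div (hDt j' hj' x) (mul_ne_zero hx (Real.exp_ne_zero _))
        exact this.congr_deriv (by simp only [hN]; ring)
      have hNsgn : (∀ᶠ x in atTop, 0 ≤ N x) ∨ (∀ᶠ x in atTop, N x ≤ 0) := by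
        rcases IH N hNEP with H | H | H
        · exact Or.inl (H.mono fun x hx => hx.le)
        · exact Or.inr (H.mono fun x hx => hx.le)
        · exact Or.inl (H.mono fun x hx => hx.symm.le)
      rcases hNsgn with Hs | Hs
      · obtain ⟨a, ha⟩ := eventually_atTop.mp ((hune j' hj').and Hs)
        have hcont : ContinuousOn r (Ici a) := fun x hx =>
          ((hDr x (ha x hx).1).continuousAt).continuousWithinAt
        have hdiff : DifferentiableOn ℝ r (interior (Ici a)) := by
          rw [interior_Ici]
          exact fun x hx =>
            ((hDr x (ha x (le_of_lt hx)).1).differentiableAt).differentiableWithinAt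
        have hmono : MonotoneOn r (Ici a) := by
          refine monotoneOn_of_deriv_nonneg (convex_Ici a) hcont hdiff ?_
          rw [interior_Ici]
          intro x hx
          rw [(hDr x (ha x (le_of_lt hx)).1).deriv]
          refine div_nonneg (mul_nonneg (ha x (le_of_lt hx)).2 ?_) (sq_nonneg _)
          positivity
        rcases tendsto_of_monotoneOn_Ici hmono with H | ⟨c, H⟩
        · refine Or.inr ⟨0, ?_⟩
          have := H.inv_tendsto_atTop
          refine this.congr fun x => ?_
          show (r x)⁻¹ = _
          rw [hr, inv_div]
        · exact Or.inl ⟨c, H⟩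
      · obtain ⟨a, ha⟩ := eventually_atTop.mp ((hune j' hj').and Hs)
        have hcont : ContinuousOn r (Ici a) := fun x hx =>
          ((hDr x (ha x hx).1).continuousAt).continuousWithinAt
        have hdiff : DifferentiableOn ℝ r (interior (Ici a)) := by
          rw [interior_Ici]
          exact fun x hx =>
            ((hDr x (ha x (le_of_lt hx)).1).differentiableAt).differentiableWithinAt
        have hanti : AntitoneOn r (Ici a) := by
          refine antitoneOn_of_deriv_nonpos (convex_Ici a) hcont hdiff ?_
          rw [interior_Ici]
          intro x hx
          rw [(hDr x (ha x (le_of_lt hx)).1).deriv]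
          refine div_nonpos_of_nonpos_of_nonneg (mul_nonpos_of_nonpos_of_nonneg
            (ha x (le_of_lt hx)).2 ?_) (sq_nonneg _)
          positivity
        rcases tendsto_of_antitoneOn_Ici hanti with H | ⟨c, H⟩
        · refine Or.inr ⟨0, ?_⟩
          have H1 : Tendsto (fun x => -r x) atTop atTop := tendsto_neg_atTop_iff.mpr H
          have H2 := H1.inv_tendsto_atTop
          have H3 : Tendsto (fun x => (r x)⁻¹) atTop (𝓝 0) := by
            have := H2.neg
            rw [neg_zero] at this
            refine this.congr fun x => ?_
            show -((fun x => -r x)⁻¹ x) = _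
            simp [inv_neg]
          refine H3.congr fun x => ?_
          rw [hr, inv_div]
        · exact Or.inl ⟨c, H⟩
    have htne : ∀ j ∈ s, ∀ᶠ x in atTop, u j x * Real.exp (h j x) ≠ 0 := by
      intro j hj
      filter_upwards [hune j hj] with x hx
      exact mul_ne_zero hx (Real.exp_ne_zero _)
    have hRelTrans : ∀ a ∈ s, ∀ b ∈ s, ∀ c ∈ s, Rel a b → Rel b c → Rel a c := by
      rintro a ha b hb c hc ⟨ca, Ha⟩ ⟨cb, Hb⟩
      refine ⟨ca * cb, ?_⟩
      refine (Ha.mul Hb).congr' ?_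
      filter_upwards [htne b hb] with x hx
      exact div_mul_div_cancel₀ hx
    obtain ⟨j1, hj1, hj1max⟩ := finset_exists_forall_rel Rel s hne hRelTot hRelTrans
    set lam : ι → ℝ := fun j => if hj : j ∈ s then Classical.choose (hj1max j hj) else 0
      with hlamdef
    have hlam : ∀ j ∈ s, Tendsto
        (fun x => (u j x * Real.exp (h j x)) / (u j1 x * Real.exp (h j1 x)))
        atTop (𝓝 (lam j)) := by
      intro j hj
      have := Classical.choose_spec (hj1max j hj)
      simpa [hlamdef, dif_pos hj] using this
    set Lam : ℝ := ∑ j ∈ s, lam j with hLam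
    set ψ : ℝ → ℝ := fun x =>
      (∑ j ∈ s, u j x * Real.exp (h j x)) / (u j1 x * Real.exp (h j1 x)) with hψdef
    have hψt : Tendsto ψ atTop (𝓝 Lam) := by
      have := tendsto_finset_sum s (fun j hj => hlam j hj)
      refine this.congr fun x => ?_
      simp only [hψdef]
      rw [Finset.sum_div]
    have hfactor : ∀ᶠ x in atTop,
        (∑ j ∈ s, u j x * Real.exp (h j x)) = ψ x * (u j1 x * Real.exp (h j1 x)) := by
      filter_upwards [htne j1 hj1] with x hx
      simp only [hψdef]
      rw [div_mul_cancel₀ _ hx]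
    have htsgn : (∀ᶠ x in atTop, 0 < u j1 x * Real.exp (h j1 x)) ∨
        (∀ᶠ x in atTop, u j1 x * Real.exp (h j1 x) < 0) := by
      rcases hsgn j1 hj1 with H | H
      · refine Or.inl ?_
        filter_upwards [H] with x hx
        positivity
      · refine Or.inr ?_
        filter_upwards [H] with x hx
        exact mul_neg_of_neg_of_pos hx (Real.exp_pos _)
    by_cases hLam0 : Lam = 0
    · set C : ι → ℝ → ℝ := fun j x => v j x * u j1 x - u j x * v j1 x with hC
      set G : ℝ → ℝ := fun x => ∑ j ∈ s.erase j1, C j x * Real.exp (h j x) with hG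
      have hcardE : (s.erase j1).card ≤ k := by
        rw [Finset.card_erase_of_mem hj1]; omega
      have hGtri : Tri G := IH2 (s.erase j1) (fun j => C j) h hcardE
        (fun j hj => ((hvEP j (Finset.mem_of_mem_erase hj)).mul (hu j1 hj1)).sub
          ((hu j (Finset.mem_of_mem_erase hj)).mul (hvEP j1 hj1)))
        (fun j hj => hh j (Finset.mem_of_mem_erase hj))
      have hDψ : ∀ x : ℝ, u j1 x ≠ 0 → HasDerivAt ψ
          (G x * Real.exp (h j1 x) / (u j1 x * Real.exp (h j1 x)) ^ 2) x := by
        intro x hx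
        have hF : HasDerivAt (fun y => ∑ j ∈ s, u j y * Real.exp (h j y))
            (∑ j ∈ s, v j x * Real.exp (h j x)) x :=
          HasDerivAt.fun_sum (fun j hj => hDt j hj x)
        have hdiv := hF.div (hDt j1 hj1 x) (mul_ne_zero hx (Real.exp_ne_zero _))
        have key : (∑ j ∈ s, v j x * Real.exp (h j x)) * (u j1 x * Real.exp (h j1 x))
            - (∑ j ∈ s, u j x * Real.exp (h j x)) * (v j1 x * Real.exp (h j1 x))
            = G x * Real.exp (h j1 x) := by
          have h0 : v j1 x * Real.exp (h j1 x) * (u j1 x * Real.exp (h j1 x))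
              - u j1 x * Real.exp (h j1 x) * (v j1 x * Real.exp (h j1 x)) = 0 := by ring
          calc (∑ j ∈ s, v j x * Real.exp (h j x)) * (u j1 x * Real.exp (h j1 x))
              - (∑ j ∈ s, u j x * Real.exp (h j x)) * (v j1 x * Real.exp (h j1 x))
              = ∑ j ∈ s, (v j x * Real.exp (h j x) * (u j1 x * Real.exp (h j1 x))
                - u j x * Real.exp (h j x) * (v j1 x * Real.exp (h j1 x))) := by
                rw [Finset.sum_sub_distrib, Finset.sum_mul, Finset.sum_mul]
            _ = ∑ j ∈ s.erase j1, (v j x * Real.exp (h j x) * (u j1 x * Real.exp (h j1 x))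
                - u j x * Real.exp (h j x) * (v j1 x * Real.exp (h j1 x))) :=
                (Finset.sum_erase s h0).symm
            _ = G x * Real.exp (h j1 x) := by
                rw [hG, Finset.sum_mul]
                refine Finset.sum_congr rfl fun j hj => ?_
                simp only [hC]; ring
        rw [key] at hdiv; exact hdiv
      rcases hGtri with HG | HG | HG
      · obtain ⟨a, ha⟩ := eventually_atTop.mp ((hune j1 hj1).and HG)
        have hcont : ContinuousOn ψ (Ici a) := fun x hx =>
          ((hDψ x (ha x hx).1).continuousAt).continuousWithinAt
        have hmono : StrictMonoOn ψ (Ici a) := by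
          refine strictMonoOn_of_deriv_pos (convex_Ici a) hcont ?_
          rw [interior_Ici]; intro x hx
          rw [(hDψ x (ha x (le_of_lt hx)).1).deriv]
          exact div_pos (mul_pos (ha x (le_of_lt hx)).2 (Real.exp_pos _))
            (pow_two_pos_of_ne_zero (mul_ne_zero (ha x (le_of_lt hx)).1
              (Real.exp_ne_zero _)))
        have hneg : ∀ x ≥ a, ψ x < 0 := by
          intro x hx
          have hx1 : x + 1 ∈ Ici a := by simp only [mem_Ici]; linarith
          have h1 : ψ (x + 1) ≤ Lam := by
            refine ge_of_tendsto hψt ?_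
            filter_upwards [eventually_ge_atTop (x + 1)] with y hy
            exact hmono.monotoneOn hx1 (mem_Ici.mpr (by linarith)) hy
          have h2 : ψ x < ψ (x + 1) := hmono (mem_Ici.mpr hx) hx1 (by linarith)
          rw [hLam0] at h1
          linarith
        exact tri_mul hfactor (Or.inr (eventually_atTop.mpr ⟨a, hneg⟩)) htsgn
      · obtain ⟨a, ha⟩ := eventually_atTop.mp ((hune j1 hj1).and HG)
        have hcont : ContinuousOn ψ (Ici a) := fun x hx =>
          ((hDψ x (ha x hx).1).continuousAt).continuousWithinAt
        have hanti : StrictAntiOn ψ (Ici a) := by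
          refine strictAntiOn_of_deriv_neg (convex_Ici a) hcont ?_
          rw [interior_Ici]; intro x hx
          rw [(hDψ x (ha x (le_of_lt hx)).1).deriv]
          exact div_neg_of_neg_of_pos (mul_neg_of_neg_of_pos (ha x (le_of_lt hx)).2
            (Real.exp_pos _))
            (pow_two_pos_of_ne_zero (mul_ne_zero (ha x (le_of_lt hx)).1
              (Real.exp_ne_zero _)))
        have hpos : ∀ x ≥ a, 0 < ψ x := by
          intro x hx
          have hx1 : x + 1 ∈ Ici a := by simp only [mem_Ici]; linarith
          have h1 : Lam ≤ ψ (x + 1) := by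
            refine le_of_tendsto hψt ?_
            filter_upwards [eventually_ge_atTop (x + 1)] with y hy
            exact hanti.antitoneOn hx1 (mem_Ici.mpr (by linarith)) hy
          have h2 : ψ (x + 1) < ψ x := hanti (mem_Ici.mpr hx) hx1 (by linarith)
          rw [hLam0] at h1
          linarith
        exact tri_mul hfactor (Or.inl (eventually_atTop.mpr ⟨a, hpos⟩)) htsgn
      · obtain ⟨a, ha⟩ := eventually_atTop.mp ((hune j1 hj1).and HG)
        have hcont : ContinuousOn ψ (Ici a) := fun x hx =>
          ((hDψ x (ha x hx).1).continuousAt).continuousWithinAt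
        have hdiff : DifferentiableOn ℝ ψ (interior (Ici a)) := by
          rw [interior_Ici]
          exact fun x hx =>
            ((hDψ x (ha x (le_of_lt hx)).1).differentiableAt).differentiableWithinAt
        have hderiv0 : ∀ x ∈ interior (Ici a), deriv ψ x = 0 := by
          rw [interior_Ici]; intro x hx
          rw [(hDψ x (ha x (le_of_lt hx)).1).deriv, (ha x (le_of_lt hx)).2]
          ring
        have hmono : MonotoneOn ψ (Ici a) :=
          monotoneOn_of_deriv_nonneg (convex_Ici a) hcont hdiff
            (fun x hx => le_of_eq (hderiv0 x hx).symm)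
        have hanti : AntitoneOn ψ (Ici a) :=
          antitoneOn_of_deriv_nonpos (convex_Ici a) hcont hdiff
            (fun x hx => le_of_eq (hderiv0 x hx))
        have hconst : ∀ x ≥ a, ψ x = ψ a := fun x hx =>
          le_antisymm (hanti (self_mem_Ici) (mem_Ici.mpr hx) hx)
            (hmono (self_mem_Ici) (mem_Ici.mpr hx) hx)
        have hψa : ψ a = Lam := by
          refine tendsto_nhds_unique ?_ hψt
          refine Tendsto.congr' ?_ tendsto_const_nhds
          filter_upwards [eventually_ge_atTop a] with y hy
          exact (hconst y hy).symm
        refine Or.inr (Or.inr ?_)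
        filter_upwards [hfactor, eventually_ge_atTop a] with x h1 h2
        rw [h1, hconst x h2, hψa, hLam0, zero_mul]

    · have hψsgn : (∀ᶠ x in atTop, 0 < ψ x) ∨ (∀ᶠ x in atTop, ψ x < 0) := by
        rcases (Ne.symm hLam0).lt_or_gt with hl | hl
        · exact Or.inl (hψt.eventually (eventually_gt_nhds hl))
        · exact Or.inr (hψt.eventually (eventually_lt_nhds hl))
      exact tri_mul hfactor hψsgn htsgn

/-- Representation of a level-`n+1` function as a finite sum `∑ uⱼ exp hⱼ`
with level-`n` data. -/
theorem EP_repr {m : ℕ} {f : ℝ → ℝ} (hf : EP m f) : ∀ n : ℕ, m ≤ n + 1 →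
    ∃ (k : ℕ) (u h : Fin k → ℝ → ℝ), (∀ j, EP n (u j)) ∧ (∀ j, EP n (h j)) ∧
      ∀ x, f x = ∑ j, u j x * Real.exp (h j x) := by
  induction hf with
  | const m c =>
    intro n _
    exact ⟨1, fun _ _ => c, fun _ _ => 0, fun _ => EP.const n c, fun _ => EP.const n 0,
      fun x => by simp⟩
  | id m =>
    intro n _
    exact ⟨1, fun _ x => x, fun _ _ => 0, fun _ => EP.id n, fun _ => EP.const n 0,
      fun x => by simp⟩
  | add hf hg ihf ihg =>
    intro n hm
    obtain ⟨k1, u1, h1, hu1, hh1, he1⟩ := ihf n hm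
    obtain ⟨k2, u2, h2, hu2, hh2, he2⟩ := ihg n hm
    refine ⟨k1 + k2, Fin.append u1 u2, Fin.append h1 h2, ?_, ?_, ?_⟩
    · intro j
      refine Fin.addCases (fun i => ?_) (fun i => ?_) j
      · rw [Fin.append_left]; exact hu1 i
      · rw [Fin.append_right]; exact hu2 i
    · intro j
      refine Fin.addCases (fun i => ?_) (fun i => ?_) j
      · rw [Fin.append_left]; exact hh1 i
      · rw [Fin.append_right]; exact hh2 i
    · intro x
      rw [Fin.sum_univ_add]
      simp only [Fin.append_left, Fin.append_right]
      rw [← he1 x, ← he2 x]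
  | mul hf hg ihf ihg =>
    rename_i nm f g
    intro n hm
    obtain ⟨k1, u1, h1, hu1, hh1, he1⟩ := ihf n hm
    obtain ⟨k2, u2, h2, hu2, hh2, he2⟩ := ihg n hm
    set e := finProdFinEquiv.symm with he
    refine ⟨k1 * k2, fun j x => u1 (e j).1 x * u2 (e j).2 x,
      fun j x => h1 (e j).1 x + h2 (e j).2 x,
      fun j => (hu1 _).mul (hu2 _), fun j => (hh1 _).add (hh2 _), fun x => ?_⟩
    calc f x * g x
        = (∑ i, u1 i x * Real.exp (h1 i x)) * (∑ i, u2 i x * Real.exp (h2 i x)) := by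
          rw [he1, he2]
      _ = ∑ p : Fin k1 × Fin k2, (u1 p.1 x * Real.exp (h1 p.1 x)) *
            (u2 p.2 x * Real.exp (h2 p.2 x)) := by
          rw [Finset.sum_mul_sum]
          exact (Fintype.sum_prod_type' fun a b =>
            (u1 a x * Real.exp (h1 a x)) * (u2 b x * Real.exp (h2 b x))).symm
      _ = ∑ j : Fin (k1 * k2), u1 (e j).1 x * u2 (e j).2 x *
            Real.exp (h1 (e j).1 x + h2 (e j).2 x) := by
          rw [← Equiv.sum_comp e (fun p : Fin k1 × Fin k2 =>
            (u1 p.1 x * Real.exp (h1 p.1 x)) * (u2 p.2 x * Real.exp (h2 p.2 x)))]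
          refine Finset.sum_congr rfl fun j _ => ?_
          rw [Real.exp_add]; ring
  | exp hf ihf =>
    rename_i m f
    intro n hm
    have hm' : m ≤ n := Nat.lt_succ_iff.mp (Nat.lt_of_lt_of_le (Nat.lt_succ_self m) hm)
    exact ⟨1, fun _ _ => 1, fun _ => f, fun _ => EP.const n 1, fun _ => hf.le hm',
      fun x => by simp⟩
  | mono hf ihf =>
    rename_i m f
    intro n hm
    have hm' : m ≤ n := Nat.succ_le_succ_iff.mp hm
    exact ⟨1, fun _ => f, fun _ _ => 0, fun _ => hf.le hm', fun _ => EP.const n 0,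
      fun x => by simp⟩

/-- Main induction: sign trichotomy at `atTop` for every level. -/
theorem tri_of_EP : ∀ n : ℕ, ∀ f : ℝ → ℝ, EP n f → Tri f := by
  intro n
  induction n with
  | zero => exact fun f hf => tri_of_EP_zero hf
  | succ n IH =>
    intro f hf
    obtain ⟨k, u, h, hu, hh, heq⟩ := EP_repr hf n le_rfl
    have := sum_tri n IH k (Finset.univ : Finset (Fin k)) u h
      (by simp) (fun j _ => hu j) (fun j _ => hh j)
    exact Tri.congr (Eventually.of_forall fun x => (heq x).symm) this

theorem expPoly_tri {f : ℝ → ℝ} (hf : ExpPoly f) : Tri f := by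
  obtain ⟨n, hn⟩ := expPoly_exists_EP hf
  exact tri_of_EP n f hn

theorem expPoly_analyticAt {f : ℝ → ℝ} (hf : ExpPoly f) : ∀ x : ℝ, AnalyticAt ℝ f x := by
  induction hf with
  | const c => exact fun x => analyticAt_const
  | id => exact fun x => analyticAt_id
  | add _ _ ihf ihg => exact fun x => (ihf x).add (ihg x)
  | mul _ _ ihf ihg => exact fun x => (ihf x).mul (ihg x)
  | exp _ ihf => exact fun x => (ihf x).rexp

/-- **Nonzero nested exponential polynomials have finitely many real zeros.**
For every nested exponential polynomial `f`, either `f` is identically zero on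
`ℝ`, or the zero set `{x | f x = 0}` is finite. -/
theorem expPoly_zero_set_finite (f : ℝ → ℝ) (hf : ExpPoly f) :
    (∀ x : ℝ, f x = 0) ∨ {x : ℝ | f x = 0}.Finite := by
  classical
  have hA : ∀ x : ℝ, AnalyticAt ℝ f x := expPoly_analyticAt hf
  by_cases hz : ∀ x : ℝ, f x = 0
  · exact Or.inl hz
  right
  push_neg at hz
  obtain ⟨x0, hx0⟩ := hz
  have hOn : AnalyticOnNhd ℝ f univ := fun x _ => hA x
  have hnotev : ∀ z : ℝ, ¬ (∀ᶠ x in 𝓝 z, f x = 0) := by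
    intro z hev
    have hfr : ∃ᶠ x in 𝓝[≠] z, f x = 0 := (hev.filter_mono nhdsWithin_le_nhds).frequently
    have := hOn.eqOn_zero_of_preconnected_of_frequently_eq_zero isPreconnected_univ
      (mem_univ z) hfr
    exact hx0 (this (mem_univ x0))
  have hiso : ∀ z : ℝ, ∀ᶠ x in 𝓝[≠] z, f x ≠ 0 := fun z =>
    ((hA z).eventually_eq_zero_or_eventually_ne_zero).resolve_left (hnotev z)
  -- eventual nonvanishing at +∞
  have hTop : ∀ᶠ x in atTop, f x ≠ 0 := by
    rcases expPoly_tri hf with H | H | H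
    · filter_upwards [H] with x hx; exact ne_of_gt hx
    · filter_upwards [H] with x hx; exact ne_of_lt hx
    · exfalso
      obtain ⟨a, ha⟩ := eventually_atTop.mp H
      refine hnotev (a + 1) ?_
      refine mem_of_superset (Ioi_mem_nhds (by linarith : a < a + 1)) ?_
      exact fun y hy => ha y (le_of_lt hy)
  -- eventual nonvanishing at -∞ via reflection
  have hBot : ∀ᶠ x in atTop, f (-x) ≠ 0 := by
    rcases expPoly_tri (expPoly_neg_comp hf) with H | H | H
    · filter_upwards [H] with x hx; exact ne_of_gt hx
    · filter_upwards [H] with x hx; exact ne_of_lt hx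
    · exfalso
      obtain ⟨a, ha⟩ := eventually_atTop.mp H
      refine hnotev (-(a + 1)) ?_
      refine mem_of_superset (Iio_mem_nhds (by linarith : -(a+1) < -a)) ?_
      intro y hy
      have := ha (-y) (by simp only [mem_Iio] at hy; linarith)
      simpa using this
  obtain ⟨B, hB⟩ := eventually_atTop.mp hTop
  obtain ⟨B', hB'⟩ := eventually_atTop.mp hBot
  have hc : Continuous f := continuous_iff_continuousAt.mpr fun x => (hA x).continuousAt
  set Z := {x : ℝ | f x = 0} with hZ
  have hZsub : Z ⊆ Icc (-B') B := by
    intro z hz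
    simp only [hZ, mem_setOf_eq] at hz
    constructor
    · by_contra hlt
      push_neg at hlt
      exact hB' (-z) (by linarith) (by simpa using hz)
    · by_contra hlt
      push_neg at hlt
      exact hB z (le_of_lt hlt) hz
  have hZclosed : IsClosed Z := isClosed_eq hc continuous_const
  have hZcomp : IsCompact Z := isCompact_Icc.of_isClosed_subset hZclosed hZsub
  have hdisc : DiscreteTopology Z := by
    rw [discreteTopology_subtype_iff]
    intro z hzZ
    rw [← Filter.empty_mem_iff_bot]
    have h1 : {x : ℝ | f x ≠ 0} ∈ 𝓝[≠] z ⊓ 𝓟 Z := mem_inf_of_left (hiso z)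
    have h2 : Z ∈ 𝓝[≠] z ⊓ 𝓟 Z := mem_inf_of_right (mem_principal_self Z)
    have h3 := inter_mem h1 h2
    have : {x : ℝ | f x ≠ 0} ∩ Z = ∅ := by
      ext y
      simp only [mem_inter_iff, mem_setOf_eq, hZ, mem_empty_iff_false, iff_false]
      rintro ⟨h4, h5⟩
      exact h4 h5
    rwa [this] at h3
  exact hZcomp.finite (isDiscrete_iff_discreteTopology.mpr hdisc)
end
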